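/- (Lemma 2 for states.) Let ξ be a bipartite density matrix on H_A ⊗ H_B that violates a Bell inequality: there exist POVMs {M^{a|x}} on H_A and {N^{b|y}} on H_B such that Σ B(a,b,x,y)·Tr[(M^{a|x} ⊗ N^{b|y}) ξ] > S_l, where S_l is the local bound of B. Then for any 0 < t ≤ 1, any density matrix σ on H_A ⊗ H_B, and classical register states |0⟩⟨0|, |1⟩⟨1| on ℂ² ⊗ ℂ², the state τ = t·ξ ⊗ |00⟩⟨00| + (1−t)·σ ⊗ |11⟩⟨11| on (H_A ⊗ ℂ²) ⊗ (H_B ⊗ ℂ²) violates the same Bell inequality: there exist local POVMs on H_A ⊗ ℂ² and H_B ⊗ ℂ² whose Bell value on τ exceeds S_l. -/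

import Mathlib

open Finset Matrix ComplexOrder

/-- A family of operators `M x a` is a POVM (for each setting `x`). -/
def IsPOVM {n : Type} [Fintype n] [DecidableEq n] {A X : Type} [Fintype A]
    (M : X → A → Matrix n n ℂ) : Prop :=
  (∀ x a, (M x a).PosSemidef) ∧ (∀ x, ∑ a, M x a = 1)

/-- The Bell value obtained by measuring the bipartite state `ρ` with local
POVMs `M` and `N`, for Bell coefficients `Bc`. -/
noncomputable def bellValState {nA nB : Type} [Fintype nA] [Fintype nB]
    {A B X Y : Type} [Fintype A] [Fintype B] [Fintype X] [Fintype Y]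
    (Bc : A → B → X → Y → ℝ)
    (M : X → A → Matrix nA nA ℂ) (N : Y → B → Matrix nB nB ℂ)
    (ρ : Matrix (nA × nB) (nA × nB) ℂ) : ℝ :=
  (∑ a, ∑ b, ∑ x, ∑ y,
      (Bc a b x y : ℂ) * (Matrix.kroneckerMap (· * ·) (M x a) (N y b) * ρ).trace).re

/-- The local bound: the maximal Bell value over deterministic local strategies. -/
noncomputable def localBound {A B X Y : Type} [Fintype A] [Fintype B] [Fintype X] [Fintype Y]
    [Nonempty A] [Nonempty B] [DecidableEq X] [DecidableEq Y]
    (Bc : A → B → X → Y → ℝ) : ℝ :=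
  Finset.univ.sup' Finset.univ_nonempty
    (fun fg : (X → A) × (Y → B) => ∑ x, ∑ y, Bc (fg.1 x) (fg.2 y) x y)

/-- The flagged mixture `t • ξ ⊗ |00⟩⟨00| + (1-t) • σ ⊗ |11⟩⟨11|`, with each party
holding its system together with its one-qubit classical register. -/
noncomputable def flagState {dA dB : ℕ} (t : ℝ)
    (ξ σ : Matrix (Fin dA × Fin dB) (Fin dA × Fin dB) ℂ) :
    Matrix ((Fin dA × Fin 2) × (Fin dB × Fin 2)) ((Fin dA × Fin 2) × (Fin dB × Fin 2)) ℂ :=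
  fun p q =>
    (t : ℂ) * ξ (p.1.1, p.2.1) (q.1.1, q.2.1) *
        (if p.1.2 = 0 ∧ p.2.2 = 0 ∧ q.1.2 = 0 ∧ q.2.2 = 0 then 1 else 0) +
      ((1 : ℂ) - t) * σ (p.1.1, p.2.1) (q.1.1, q.2.1) *
        (if p.1.2 = 1 ∧ p.2.2 = 1 ∧ q.1.2 = 1 ∧ q.2.2 = 1 then 1 else 0)

/-! ### Auxiliary definitions and lemmas -/

noncomputable def regP0 : Matrix (Fin 2) (Fin 2) ℂ := Matrix.diagonal ![1, 0]
noncomputable def regP1 : Matrix (Fin 2) (Fin 2) ℂ := Matrix.diagonal ![0, 1]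

lemma regP0_psd : regP0.PosSemidef := by
  refine Matrix.posSemidef_diagonal_iff.mpr ?_
  intro i; fin_cases i <;> simp [zero_le_one]

lemma regP1_psd : regP1.PosSemidef := by
  refine Matrix.posSemidef_diagonal_iff.mpr ?_
  intro i; fin_cases i <;> simp [zero_le_one]

lemma regP0_add_regP1 : regP0 + regP1 = 1 := by
  ext i j
  fin_cases i <;> fin_cases j <;> simp [regP0, regP1, Matrix.one_apply]

/-- Extend a POVM by a classical register: on the `0` sector measure `M`, on the `1`
sector output the deterministic answer `f x`. -/
noncomputable def ext1 {d : ℕ} {A X : Type} [Fintype A] [DecidableEq A]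
    (M : X → A → Matrix (Fin d) (Fin d) ℂ) (f : X → A) :
    X → A → Matrix (Fin d × Fin 2) (Fin d × Fin 2) ℂ :=
  fun x a => Matrix.kroneckerMap (· * ·) (M x a) regP0 +
    (if a = f x then (1:ℂ) else 0) •
      Matrix.kroneckerMap (· * ·) (1 : Matrix (Fin d) (Fin d) ℂ) regP1

lemma kron_conjTranspose' {m n : Type} [Fintype m] [Fintype n]
    (P : Matrix m m ℂ) (Q : Matrix n n ℂ) :
    (Matrix.kroneckerMap (· * ·) P Q)ᴴ = Matrix.kroneckerMap (· * ·) Pᴴ Qᴴ := by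
  ext ⟨i,k⟩ ⟨j,l⟩
  simp [Matrix.conjTranspose_apply, Matrix.kroneckerMap_apply, mul_comm]

lemma kron_posSemidef {m n : Type} [Fintype m] [Fintype n] [DecidableEq m] [DecidableEq n]
    {P : Matrix m m ℂ} {Q : Matrix n n ℂ} (hP : P.PosSemidef) (hQ : Q.PosSemidef) :
    (Matrix.kroneckerMap (· * ·) P Q).PosSemidef := by
  exact Matrix.PosSemidef.kronecker hP hQ

lemma ext1_isPOVM {d : ℕ} {A X : Type} [Fintype A] [DecidableEq A]
    (M : X → A → Matrix (Fin d) (Fin d) ℂ) (f : X → A) (hM : IsPOVM M) :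
    IsPOVM (ext1 M f) := by
  constructor
  · intro x a
    refine Matrix.PosSemidef.add (kron_posSemidef (hM.1 x a) regP0_psd) ?_
    by_cases h : a = f x
    · simpa [h] using kron_posSemidef (Matrix.PosSemidef.one) regP1_psd
    · simp [h, Matrix.PosSemidef.zero]
  · intro x
    have h1 : ∑ a, Matrix.kroneckerMap (· * ·) (M x a) regP0
        = Matrix.kroneckerMap (· * ·) (1 : Matrix (Fin d) (Fin d) ℂ) regP0 := by
      rw [← hM.2 x]
      ext ⟨i,r⟩ ⟨j,s⟩
      simp [Matrix.sum_apply, Matrix.kroneckerMap_apply, Finset.sum_mul]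
    have h2 : ∑ a, (if a = f x then (1:ℂ) else 0) •
        Matrix.kroneckerMap (· * ·) (1 : Matrix (Fin d) (Fin d) ℂ) regP1
        = Matrix.kroneckerMap (· * ·) (1 : Matrix (Fin d) (Fin d) ℂ) regP1 := by
      rw [← Finset.sum_smul]
      simp
    simp only [ext1]
    rw [Finset.sum_add_distrib, h1, h2, ← Matrix.kronecker_add, regP0_add_regP1,
      Matrix.one_kronecker_one]

set_option maxHeartbeats 1000000 in
lemma trace_ext {dA dB : ℕ} (t : ℝ) (ξ σ : Matrix (Fin dA × Fin dB) (Fin dA × Fin dB) ℂ)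
    (MA : Matrix (Fin dA) (Fin dA) ℂ) (NB : Matrix (Fin dB) (Fin dB) ℂ) (cA cB : ℂ) :
    (Matrix.kroneckerMap (· * ·)
        (Matrix.kroneckerMap (· * ·) MA regP0 +
          cA • Matrix.kroneckerMap (· * ·) (1 : Matrix (Fin dA) (Fin dA) ℂ) regP1)
        (Matrix.kroneckerMap (· * ·) NB regP0 +
          cB • Matrix.kroneckerMap (· * ·) (1 : Matrix (Fin dB) (Fin dB) ℂ) regP1)
      * flagState t ξ σ).trace
    = (t : ℂ) * (Matrix.kroneckerMap (· * ·) MA NB * ξ).trace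
      + ((1:ℂ) - t) * cA * cB * σ.trace := by
  simp only [Matrix.trace, Matrix.diag_apply, Matrix.mul_apply, flagState,
    Matrix.kroneckerMap_apply, Matrix.add_apply, Matrix.smul_apply, Matrix.one_apply,
    regP0, regP1, Matrix.diagonal_apply, smul_eq_mul]
  rw [Fintype.sum_prod_type]
  simp only [Fintype.sum_prod_type, Fin.sum_univ_two]
  simp [Finset.mul_sum, Finset.sum_mul, mul_ite, ite_mul, mul_zero, zero_mul, mul_one, one_mul]
  rw [Finset.sum_add_distrib]
  congr 1
  · refine Finset.sum_congr rfl fun _ _ => Finset.sum_congr rfl fun _ _ =>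
      Finset.sum_congr rfl fun _ _ => Finset.sum_congr rfl fun _ _ => by ring
  · refine Finset.sum_congr rfl fun _ _ => Finset.sum_congr rfl fun _ _ => by ring

lemma sum_swap4 {α β γ δ M : Type*} [AddCommMonoid M] [Fintype α] [Fintype β] [Fintype γ]
    [Fintype δ] (F : α → β → γ → δ → M) :
    ∑ a, ∑ b, ∑ c, ∑ d, F a b c d = ∑ c, ∑ d, ∑ a, ∑ b, F a b c d := by
  conv_lhs => enter [2, a]; rw [Finset.sum_comm]
  rw [Finset.sum_comm]
  conv_lhs => enter [2, c, 2, a]; rw [Finset.sum_comm]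
  conv_lhs => enter [2, c]; rw [Finset.sum_comm]

lemma delta_sum {A B X Y : Type} [Fintype A] [Fintype B] [Fintype X] [Fintype Y]
    [DecidableEq A] [DecidableEq B] (Bc : A → B → X → Y → ℝ) (f : X → A) (g : Y → B) :
    ∑ a, ∑ b, ∑ x, ∑ y, (Bc a b x y : ℂ) * (if a = f x then (1:ℂ) else 0) *
      (if b = g y then (1:ℂ) else 0) = ∑ x, ∑ y, (Bc (f x) (g y) x y : ℂ) := by
  rw [sum_swap4]
  refine Finset.sum_congr rfl fun x _ => Finset.sum_congr rfl fun y _ => ?_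
  simp [Finset.sum_ite_eq, mul_ite, ite_mul]

theorem stmt_5 {dA dB : ℕ} {A B X Y : Type} [Fintype A] [Fintype B] [Fintype X] [Fintype Y]
    [Nonempty A] [Nonempty B] [Nonempty X] [Nonempty Y]
    [DecidableEq X] [DecidableEq Y]
    (Bc : A → B → X → Y → ℝ)
    (ξ σ : Matrix (Fin dA × Fin dB) (Fin dA × Fin dB) ℂ)
    (hξ : ξ.PosSemidef ∧ ξ.trace = 1) (hσ : σ.PosSemidef ∧ σ.trace = 1)
    (M : X → A → Matrix (Fin dA) (Fin dA) ℂ) (N : Y → B → Matrix (Fin dB) (Fin dB) ℂ)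
    (hM : IsPOVM M) (hN : IsPOVM N)
    (hviol : localBound Bc < bellValState Bc M N ξ)
    (t : ℝ) (ht0 : 0 < t) (ht1 : t ≤ 1) :
    ∃ (M' : X → A → Matrix (Fin dA × Fin 2) (Fin dA × Fin 2) ℂ)
      (N' : Y → B → Matrix (Fin dB × Fin 2) (Fin dB × Fin 2) ℂ),
      IsPOVM M' ∧ IsPOVM N' ∧
        localBound Bc < bellValState Bc M' N' (flagState t ξ σ) := by
  classical
  obtain ⟨fg, -, hfg⟩ := Finset.exists_mem_eq_sup' (Finset.univ_nonempty)
    (fun fg : (X → A) × (Y → B) => ∑ x, ∑ y, Bc (fg.1 x) (fg.2 y) x y)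
  set f := fg.1 with hf
  set g := fg.2 with hg
  refine ⟨ext1 M f, ext1 N g, ext1_isPOVM M f hM, ext1_isPOVM N g hN, ?_⟩
  have htr : ∀ (x : X) (y : Y) (a : A) (b : B),
      (Matrix.kroneckerMap (· * ·) (ext1 M f x a) (ext1 N g y b) * flagState t ξ σ).trace
      = (t : ℂ) * (Matrix.kroneckerMap (· * ·) (M x a) (N y b) * ξ).trace
        + ((1:ℂ) - t) * (if a = f x then (1:ℂ) else 0) * (if b = g y then (1:ℂ) else 0) := by
    intro x y a b
    simp only [ext1]
    rw [trace_ext t ξ σ (M x a) (N y b) _ _, hσ.2, mul_one]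
  have hbell : bellValState Bc (ext1 M f) (ext1 N g) (flagState t ξ σ)
      = t * bellValState Bc M N ξ + (1 - t) * (∑ x, ∑ y, Bc (f x) (g y) x y) := by
    unfold bellValState
    simp only [htr]
    have hsplit : (∑ a, ∑ b, ∑ x, ∑ y, (Bc a b x y : ℂ) *
        ((t : ℂ) * (Matrix.kroneckerMap (· * ·) (M x a) (N y b) * ξ).trace
          + ((1:ℂ) - t) * (if a = f x then (1:ℂ) else 0) * (if b = g y then (1:ℂ) else 0)))
        = (t : ℂ) * (∑ a, ∑ b, ∑ x, ∑ y,
            (Bc a b x y : ℂ) * (Matrix.kroneckerMap (· * ·) (M x a) (N y b) * ξ).trace)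
          + ((1:ℂ) - t) * ∑ x, ∑ y, (Bc (f x) (g y) x y : ℂ) := by
      rw [← delta_sum Bc f g]
      simp only [Finset.mul_sum]
      rw [← Finset.sum_add_distrib]
      refine Finset.sum_congr rfl fun a _ => ?_
      rw [← Finset.sum_add_distrib]
      refine Finset.sum_congr rfl fun b _ => ?_
      rw [← Finset.sum_add_distrib]
      refine Finset.sum_congr rfl fun x _ => ?_
      rw [← Finset.sum_add_distrib]
      refine Finset.sum_congr rfl fun y _ => by ring
    rw [hsplit]
    have hcast : ∑ x, ∑ y, (Bc (f x) (g y) x y : ℂ)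
        = ((∑ x, ∑ y, Bc (f x) (g y) x y : ℝ) : ℂ) := by push_cast; rfl
    rw [hcast]
    have h1t : ((1:ℂ) - t) = ((1 - t : ℝ) : ℂ) := by push_cast; ring
    rw [h1t, Complex.add_re, Complex.re_ofReal_mul, Complex.re_ofReal_mul, Complex.ofReal_re]
  rw [hbell]
  have hS : localBound Bc = ∑ x, ∑ y, Bc (f x) (g y) x y := hfg
  rw [← hS]
  nlinarith [mul_pos ht0 (sub_pos.mpr hviol)]
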